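/- Define f(λ,σ) := (1−σ²)² (μ₊² + μ₋²)/(μ₊ μ₋)^{5/2}, where μ₊ := 1+λ²+2λσ and μ₋ := 1+λ²−2λσ. For any fixed λ with 0 < λ ≤ √((5−√21)/2) and σ ∈ (0,1) with μ₊, μ₋ > 0, the partial derivative ∂f/∂σ ≤ 0; i.e., f is nonincreasing in σ on [0,1). -/

import Mathlib

set_option maxHeartbeats 1000000 in
theorem stmt_7 (lam σ : ℝ) (hlam : 0 < lam)
    (hlam2 : lam ≤ Real.sqrt ((5 - Real.sqrt 21)/2))
    (hσ : σ ∈ Set.Ioo (0:ℝ) 1)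
    (hp : 0 < 1 + lam^2 + 2*lam*σ) (hm : 0 < 1 + lam^2 - 2*lam*σ) :
    deriv (fun s : ℝ =>
        (1 - s^2)^2 * (((1+lam^2+2*lam*s)^2 + (1+lam^2-2*lam*s)^2) /
          ((1+lam^2+2*lam*s)*(1+lam^2-2*lam*s)) ^ ((5:ℝ)/2))) σ ≤ 0 := by
  obtain ⟨hσ0, hσ1⟩ := hσ
  -- lam^2 bound
  have hs21 : Real.sqrt 21 ≤ 5 := by
    nlinarith [Real.sq_sqrt (by norm_num : (21:ℝ) ≥ 0), Real.sqrt_nonneg 21]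
  have hc : (0:ℝ) ≤ (5 - Real.sqrt 21)/2 := by linarith
  have hx2 : lam^2 ≤ (5 - Real.sqrt 21)/2 := by
    have := pow_le_pow_left₀ hlam.le hlam2 2
    rwa [Real.sq_sqrt hc] at this
  have hkey : 28*lam^2 - 4*(1+lam^2)^2 ≤ 0 := by
    nlinarith [Real.sq_sqrt (by norm_num : (21:ℝ) ≥ 0), Real.sqrt_nonneg 21,
      sq_nonneg (lam^2 - (5 - Real.sqrt 21)/2)]
  -- derivatives
  have h1 : HasDerivAt (fun s : ℝ => 1 + lam^2 + 2*lam*s) (2*lam) σ := by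
    simpa using ((hasDerivAt_id σ).const_mul (2*lam)).const_add (1+lam^2)
  have h2 : HasDerivAt (fun s : ℝ => 1 + lam^2 - 2*lam*s) (-(2*lam)) σ := by
    simpa using ((hasDerivAt_id σ).const_mul (2*lam)).const_sub (1+lam^2)
  set P := 1 + lam^2 + 2*lam*σ with hP
  set M := 1 + lam^2 - 2*lam*σ with hM
  have hD : HasDerivAt (fun s : ℝ => (1+lam^2+2*lam*s)*(1+lam^2-2*lam*s))
      (2*lam*M + P*(-(2*lam))) σ := h1.mul h2
  have htpos : 0 < P*M := mul_pos hp hm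
  have hDpow : HasDerivAt (fun s : ℝ => ((1+lam^2+2*lam*s)*(1+lam^2-2*lam*s)) ^ ((5:ℝ)/2))
      ((2*lam*M + P*(-(2*lam))) * ((5:ℝ)/2) * (P*M) ^ ((5:ℝ)/2 - 1)) σ :=
    hD.rpow_const (Or.inl (ne_of_gt htpos))
  have hN : HasDerivAt (fun s : ℝ => (1+lam^2+2*lam*s)^2 + (1+lam^2-2*lam*s)^2)
      (2*P^1*(2*lam) + 2*M^1*(-(2*lam))) σ := by
    simpa using (h1.fun_pow 2).fun_add (h2.fun_pow 2)
  have hG : HasDerivAt (fun s : ℝ => (1 - s^2)^2) (2*(1-σ^2)^1 * (-(2*σ^1))) σ := by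
    have : HasDerivAt (fun s : ℝ => 1 - s^2) (-(2*σ^1)) σ := by
      simpa using (hasDerivAt_pow 2 σ).const_sub 1
    simpa using this.fun_pow 2
  have hDpne : (P*M) ^ ((5:ℝ)/2) ≠ 0 := ne_of_gt (Real.rpow_pos_of_pos htpos _)
  have hQ : HasDerivAt (fun s : ℝ => ((1+lam^2+2*lam*s)^2 + (1+lam^2-2*lam*s)^2) /
      ((1+lam^2+2*lam*s)*(1+lam^2-2*lam*s)) ^ ((5:ℝ)/2))
      (((2*P^1*(2*lam) + 2*M^1*(-(2*lam))) * ((P*M) ^ ((5:ℝ)/2)) -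
        (P^2+M^2) * ((2*lam*M + P*(-(2*lam))) * ((5:ℝ)/2) * (P*M) ^ ((5:ℝ)/2 - 1))) /
        ((P*M) ^ ((5:ℝ)/2))^2) σ := hN.div hDpow hDpne
  have hF := hG.fun_mul hQ
  rw [hF.deriv]
  -- rewrite rpow in terms of sqrt
  set t := P*M with ht
  set r := Real.sqrt t with hrdef
  have hr0 : 0 < r := Real.sqrt_pos.mpr htpos
  have hr2 : r^2 = t := Real.sq_sqrt htpos.le
  have h52 : t ^ ((5:ℝ)/2) = t^2 * r := by
    rw [show ((5:ℝ)/2) = (2:ℕ) + (1/2:ℝ) by norm_num, Real.rpow_add htpos,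
      Real.rpow_natCast, ← Real.rpow_natCast t 2]
    rw [Real.rpow_natCast, hrdef, Real.sqrt_eq_rpow]
  have h32 : t ^ ((5:ℝ)/2 - 1) = t * r := by
    rw [show ((5:ℝ)/2 - 1) = (1:ℕ) + (1/2:ℝ) by norm_num, Real.rpow_add htpos,
      Real.rpow_natCast, hrdef, Real.sqrt_eq_rpow, pow_one]
  rw [h52, h32]
  have htne : t ≠ 0 := ne_of_gt htpos
  have hrne : r ≠ 0 := ne_of_gt hr0
  have key : 2*(1-σ^2)^1 * (-(2*σ^1)) * ((P^2+M^2) / (t^2*r)) +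
      (1-σ^2)^2 * (((2*P^1*(2*lam) + 2*M^1*(-(2*lam))) * (t^2*r) -
        (P^2+M^2) * ((2*lam*M + P*(-(2*lam))) * ((5:ℝ)/2) * (t*r))) / (t^2*r)^2)
      = t*r*(t*((2*(1-σ^2)*(-(2*σ)))*(P^2+M^2) + (1-σ^2)^2*(2*P*(2*lam)+2*M*(-(2*lam))))
          - (5:ℝ)/2*(1-σ^2)^2*(P^2+M^2)*(2*lam*M + P*(-(2*lam)))) / (t^2*r)^2 := by
    field_simp
    ring
  rw [key]
  apply div_nonpos_of_nonpos_of_nonneg _ (by positivity)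
  have hu : (0:ℝ) < 1 - σ^2 := by nlinarith
  have hkey' : (0:ℝ) ≤ 4*(1+lam^2)^2 - 28*lam^2 := by linarith
  have hInner : -8*(1+lam^2)^4 + 56*lam^2*(1+lam^2)^2 + 32*lam^4*σ^4 + 96*lam^4*σ^2
      - 56*lam^2*(1+lam^2)^2*σ^2 ≤ 0 := by
    nlinarith [mul_nonneg hkey' (sq_nonneg (1+lam^2)),
      mul_nonneg (mul_nonneg (sq_nonneg σ) (sq_nonneg lam)) hkey',
      mul_nonneg (mul_nonneg (mul_nonneg (sq_nonneg lam) (sq_nonneg lam)) (sq_nonneg σ)) hu.le,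
      sq_nonneg σ, hu.le]
  have hWform : t*((2*(1-σ^2)*(-(2*σ)))*(P^2+M^2) + (1-σ^2)^2*(2*P*(2*lam)+2*M*(-(2*lam))))
      - (5:ℝ)/2*(1-σ^2)^2*(P^2+M^2)*(2*lam*M + P*(-(2*lam)))
      = σ*(1-σ^2)*(-8*(1+lam^2)^4 + 56*lam^2*(1+lam^2)^2 + 32*lam^4*σ^4 + 96*lam^4*σ^2
          - 56*lam^2*(1+lam^2)^2*σ^2) := by
    rw [ht, hP, hM]; ring
  have hW : t*((2*(1-σ^2)*(-(2*σ)))*(P^2+M^2) + (1-σ^2)^2*(2*P*(2*lam)+2*M*(-(2*lam))))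
      - (5:ℝ)/2*(1-σ^2)^2*(P^2+M^2)*(2*lam*M + P*(-(2*lam))) ≤ 0 := by
    rw [hWform]
    exact mul_nonpos_of_nonneg_of_nonpos (mul_nonneg hσ0.le hu.le) hInner
  exact mul_nonpos_of_nonneg_of_nonpos (by positivity) hW
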